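/- Let $U \subseteq \mathbb{R}^N$ be open, let $\varphi^{\alpha,i} : U \to \mathbb{R}$ ($1 \le \alpha \le L$, $1 \le i \le N$) be $C^2$ functions, let $\varepsilon_\alpha \in \mathbb{R}$, and let $b^{ij}_k : U \to \mathbb{R}$ be $C^1$ functions satisfying $\partial b^{jk}_r/\partial u^s - \partial b^{jk}_s/\partial u^r = \sum_{\alpha=1}^L \varepsilon_\alpha \left( \tfrac{\partial \varphi^{\alpha,j}}{\partial u^s} \tfrac{\partial \varphi^{\alpha,k}}{\partial u^r} - \tfrac{\partial \varphi^{\alpha,j}}{\partial u^r} \tfrac{\partial \varphi^{\alpha,k}}{\partial u^s} \right)$ for all indices. Define $A^{ij}_k = b^{ij}_k - \sum_{\alpha=1}^L \varepsilon_\alpha \varphi^{\alpha,i} \, \partial \varphi^{\alpha,j}/\partial u^k$. Then for each fixed $i,j$ the family $(A^{ij}_k)_k$ is closed, i.e. $\partial A^{ij}_k/\partial u^l = \partial A^{ij}_l/\partial u^k$ on $U$ for all $k,l$. -/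

import Mathlib

/-- Partial derivative of `f` in the `k`-th coordinate direction at `x`. -/
noncomputable def pd {N : ℕ} (f : (Fin N → ℝ) → ℝ) (k : Fin N) (x : Fin N → ℝ) : ℝ :=
  fderiv ℝ f x (Pi.single k 1)

lemma pd_sub {N : ℕ} {f g : (Fin N → ℝ) → ℝ} {k : Fin N} {x : Fin N → ℝ}
    (hf : DifferentiableAt ℝ f x) (hg : DifferentiableAt ℝ g x) :
    pd (fun y => f y - g y) k x = pd f k x - pd g k x := by
  unfold pd; rw [fderiv_fun_sub hf hg]; rfl

lemma pd_sum {N L : ℕ} {f : Fin L → (Fin N → ℝ) → ℝ} {k : Fin N} {x : Fin N → ℝ}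
    (hf : ∀ α, DifferentiableAt ℝ (f α) x) :
    pd (fun y => ∑ α, f α y) k x = ∑ α, pd (f α) k x := by
  unfold pd
  rw [fderiv_fun_sum (fun α _ => hf α)]
  simp

lemma pd_mul {N : ℕ} {f g : (Fin N → ℝ) → ℝ} {k : Fin N} {x : Fin N → ℝ}
    (hf : DifferentiableAt ℝ f x) (hg : DifferentiableAt ℝ g x) :
    pd (fun y => f y * g y) k x = pd f k x * g x + f x * pd g k x := by
  unfold pd
  rw [fderiv_fun_mul hf hg]
  simp [mul_comm]
  ring

lemma pd_diff {N : ℕ} {f : (Fin N → ℝ) → ℝ} {x : Fin N → ℝ} {k : Fin N}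
    (hf : ContDiffAt ℝ 2 f x) :
    DifferentiableAt ℝ (fun y => pd f k y) x := by
  unfold pd
  exact (hf.fderiv_right (m := 1) (by norm_num)).differentiableAt one_ne_zero |>.clm_apply
    (differentiableAt_const _)

lemma pd_symm {N : ℕ} {f : (Fin N → ℝ) → ℝ} {x : Fin N → ℝ} (k l : Fin N)
    (hf : ContDiffAt ℝ 2 f x) :
    pd (fun y => pd f k y) l x = pd (fun y => pd f l y) k x := by
  have hd : DifferentiableAt ℝ (fderiv ℝ f) x :=
    (hf.fderiv_right (m := 1) (by norm_num)).differentiableAt one_ne_zero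
  have hrw : ∀ (m n : Fin N), pd (fun y => pd f m y) n x
      = fderiv ℝ (fderiv ℝ f) x (Pi.single n 1) (Pi.single m 1) := by
    intro m n
    unfold pd
    rw [fderiv_clm_apply hd (differentiableAt_const (Pi.single m (1:ℝ)))]
    simp
  rw [hrw, hrw]
  exact hf.isSymmSndFDerivAt (by simp [minSmoothness_of_isRCLikeNormedField]) (Pi.single l 1) (Pi.single k 1)

lemma pd_const_mul {N : ℕ} {f : (Fin N → ℝ) → ℝ} {k : Fin N} {x : Fin N → ℝ} (c : ℝ)
    (hf : DifferentiableAt ℝ f x) :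
    pd (fun y => c * f y) k x = c * pd f k x := by
  unfold pd
  rw [fderiv_const_mul hf]
  simp

theorem stmt2 (N L : ℕ) (U : Set (Fin N → ℝ)) (hU : IsOpen U)
    (φ : Fin L → Fin N → (Fin N → ℝ) → ℝ) (ε : Fin L → ℝ)
    (b : Fin N → Fin N → Fin N → (Fin N → ℝ) → ℝ)
    (hφ : ∀ α i, ContDiffOn ℝ 2 (φ α i) U)
    (hb : ∀ i j k, ContDiffOn ℝ 1 (b i j k) U)
    (hrel : ∀ j k r s, ∀ x ∈ U,
      pd (b j k r) s x - pd (b j k s) r x =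
        ∑ α, ε α * (pd (φ α j) s x * pd (φ α k) r x - pd (φ α j) r x * pd (φ α k) s x)) :
    ∀ i j k l, ∀ x ∈ U,
      pd (fun y => b i j k y - ∑ α, ε α * φ α i y * pd (φ α j) k y) l x =
      pd (fun y => b i j l y - ∑ α, ε α * φ α i y * pd (φ α j) l y) k x := by
  intro i j k l x hx
  have hmem := hU.mem_nhds hx
  have hφx : ∀ α m, ContDiffAt ℝ 2 (φ α m) x := fun α m => (hφ α m).contDiffAt hmem
  have hφd : ∀ α m, DifferentiableAt ℝ (φ α m) x := fun α m =>
    (hφx α m).differentiableAt two_ne_zero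
  have hbd : ∀ m, DifferentiableAt ℝ (b i j m) x := fun m =>
    ((hb i j m).contDiffAt hmem).differentiableAt one_ne_zero
  have hsd : ∀ (m : Fin N) α, DifferentiableAt ℝ (fun y => ε α * φ α i y * pd (φ α j) m y) x := by
    intro m α
    exact ((differentiableAt_const _).mul (hφd α i)).mul (pd_diff (hφx α j))
  have expand : ∀ m n : Fin N,
      pd (fun y => b i j m y - ∑ α, ε α * φ α i y * pd (φ α j) m y) n x
      = pd (b i j m) n x - ∑ α, ε α * (pd (φ α i) n x * pd (φ α j) m x
          + φ α i x * pd (fun y => pd (φ α j) m y) n x) := by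
    intro m n
    rw [pd_sub (hbd m) (DifferentiableAt.fun_sum (fun α _ => hsd m α)),
        pd_sum (hsd m)]
    congr 1
    apply Finset.sum_congr rfl
    intro α _
    have hfun : (fun y => ε α * φ α i y * pd (φ α j) m y)
        = fun y => ε α * (φ α i y * pd (φ α j) m y) := by funext y; ring
    rw [hfun, pd_const_mul _ ((hφd α i).fun_mul (pd_diff (hφx α j))),
        pd_mul (hφd α i) (pd_diff (hφx α j))]
  rw [expand k l, expand l k]
  have hsymm : ∀ α, pd (fun y => pd (φ α j) k y) l x = pd (fun y => pd (φ α j) l y) k x :=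
    fun α => pd_symm k l (hφx α j)
  simp only [hsymm]
  have key : (∑ α, ε α * (pd (φ α i) l x * pd (φ α j) k x
          + φ α i x * pd (fun y => pd (φ α j) l y) k x))
      - (∑ α, ε α * (pd (φ α i) k x * pd (φ α j) l x
          + φ α i x * pd (fun y => pd (φ α j) l y) k x))
      = ∑ α, ε α * (pd (φ α i) l x * pd (φ α j) k x - pd (φ α i) k x * pd (φ α j) l x) := by
    rw [← Finset.sum_sub_distrib]
    apply Finset.sum_congr rfl
    intros
    ring
  linarith [hrel i j k l x hx, key]
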